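/- Sparsity Lemma (almost-sure sparsity): Let Q_k = B_{k+1}/B_k and V_k = S_{k+1}/S_k and assume lim_{k→∞} log(Q_k V_k)/1.5^k = 0. Then there is an ε₀ > 0 such that for every 0 < ε ≤ ε₀ and every ε-bounded random subset E of ℤ × ℤ≥0, with probability 1 the set E is sparse, i.e. P(⋂_k E^(k) = ∅) = 1. -/

import Mathlib

open MeasureTheory Filter
open scoped ENNReal

/-- The rectangle of radius `r` centered at the space-time point `x ∈ ℤ × ℤ≥0`. -/
def rectZN (x : ℤ × ℕ) (r : ℝ × ℝ) : Set (ℤ × ℕ) :=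
  {y | |(y.1 : ℝ) - (x.1 : ℝ)| < r.1 ∧ |(y.2 : ℝ) - (x.2 : ℝ)| < r.2}

/-- The residue operation: `resid β γ B S E k` is `E^(k+1)`, where `E^(1) = E` and
`E^(k+1)` is obtained from `E^(k)` by deleting its
`(β(B_k, S_k), γ(B_{k+1}, S_{k+1}))`-isolated points. -/
def resid (β γ : ℝ) (B S : ℕ → ℕ) (E : Set (ℤ × ℕ)) : ℕ → Set (ℤ × ℕ)
  | 0 => E
  | k + 1 =>
      {x ∈ resid β γ B S E k |
        ¬ (resid β γ B S E k ∩ rectZN x (γ * (B (k + 2) : ℝ), γ * (S (k + 2) : ℝ)) ⊆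
            rectZN x (β * (B (k + 1) : ℝ), β * (S (k + 1) : ℝ)))}

namespace SparseAux

noncomputable def Rset (γ : ℝ) (B S : ℕ → ℕ) (k : ℕ) (x : ℤ × ℕ) : Finset (ℤ × ℕ) :=
  (Finset.Icc (x.1 - (⌈γ * (B (k+2) : ℝ)⌉₊ : ℤ)) (x.1 + (⌈γ * (B (k+2) : ℝ)⌉₊ : ℤ))) ×ˢ
  (Finset.Icc (x.2 - ⌈γ * (S (k+2) : ℝ)⌉₊) (x.2 + ⌈γ * (S (k+2) : ℝ)⌉₊))

noncomputable def trees (γ : ℝ) (B S : ℕ → ℕ) : ℕ → (ℤ × ℕ) → Finset (Finset (ℤ × ℕ))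
  | 0, x => {{x}}
  | (k+1), x => (Rset γ B S k x).biUnion fun y =>
      (trees γ B S k x ×ˢ trees γ B S k y).image fun p => p.1 ∪ p.2

noncomputable def mcount (γ : ℝ) (B S : ℕ → ℕ) (k : ℕ) : ℕ :=
  (2*⌈γ*(B (k+2):ℝ)⌉₊+1) * (2*⌈γ*(S (k+2):ℝ)⌉₊+1)

noncomputable def tcount (γ : ℝ) (B S : ℕ → ℕ) : ℕ → ℕ
  | 0 => 1
  | (k+1) => mcount γ B S k * (tcount γ B S k)^2

lemma Rset_card_le (γ : ℝ) (B S : ℕ → ℕ) (k : ℕ) (x : ℤ × ℕ) :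
    (Rset γ B S k x).card ≤ mcount γ B S k := by
  rw [Rset, Finset.card_product, mcount]
  have h1 : (Finset.Icc (x.1 - (⌈γ * (B (k+2) : ℝ)⌉₊ : ℤ))
      (x.1 + (⌈γ * (B (k+2) : ℝ)⌉₊ : ℤ))).card = 2*⌈γ*(B (k+2):ℝ)⌉₊+1 := by
    rw [Int.card_Icc]; omega
  have h2 : (Finset.Icc (x.2 - ⌈γ * (S (k+2) : ℝ)⌉₊)
      (x.2 + ⌈γ * (S (k+2) : ℝ)⌉₊)).card ≤ 2*⌈γ*(S (k+2):ℝ)⌉₊+1 := by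
    rw [Nat.card_Icc]; omega
  rw [h1]
  exact Nat.mul_le_mul_left _ h2

lemma trees_card_le (γ : ℝ) (B S : ℕ → ℕ) : ∀ (k : ℕ) (x : ℤ × ℕ),
    (trees γ B S k x).card ≤ tcount γ B S k := by
  intro k
  induction k with
  | zero => intro x; simp [trees, tcount]
  | succ k ih =>
      intro x
      rw [trees, tcount]
      refine le_trans (Finset.card_biUnion_le) ?_
      refine le_trans (Finset.sum_le_card_nsmul _ _ ((tcount γ B S k)^2) ?_) ?_
      · intro y _
        refine le_trans (Finset.card_image_le) ?_
        rw [Finset.card_product, sq]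
        exact Nat.mul_le_mul (ih x) (ih y)
      · rw [smul_eq_mul]
        exact Nat.mul_le_mul_right _ (Rset_card_le γ B S k x)

lemma witness (β γ : ℝ) (B S : ℕ → ℕ) (hγ : 1 < γ) (hβ : 3 * γ ≤ β)
    (hB : ∀ k, 1 ≤ k → 1 ≤ B k) (hS : ∀ k, 1 ≤ k → 1 ≤ S k)
    (hBmono : ∀ k, 1 ≤ k → B k ≤ B (k+1)) (hSmono : ∀ k, 1 ≤ k → S k ≤ S (k+1))
    (hBrat : ∀ k, 3 * (B (k+1) : ℝ) ≤ (B (k+2) : ℝ))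
    (hSrat : ∀ k, 3 * (S (k+1) : ℝ) ≤ (S (k+2) : ℝ))
    (E : Set (ℤ × ℕ)) :
    ∀ k x, x ∈ resid β γ B S E k →
      ∃ A ∈ trees γ B S k x, A.card = 2^k ∧ ↑A ⊆ E ∧
        ∀ a ∈ A, |(a.1:ℝ) - (x.1:ℝ)| < 3*γ/2 * (B (k+1) : ℝ) ∧
          |(a.2:ℝ) - (x.2:ℝ)| < 3*γ/2 * (S (k+1) : ℝ) := by
  have hγ0 : (0:ℝ) < γ := by linarith
  intro k
  induction k with
  | zero =>
      intro x hx
      refine ⟨{x}, by simp [trees], by simp, by simpa [resid] using hx, ?_⟩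
      intro a ha
      rw [Finset.mem_singleton] at ha
      subst ha
      have hb : (1:ℝ) ≤ (B 1 : ℝ) := by exact_mod_cast hB 1 le_rfl
      have hs : (1:ℝ) ≤ (S 1 : ℝ) := by exact_mod_cast hS 1 le_rfl
      constructor <;> simp only [sub_self, abs_zero] <;> nlinarith
  | succ k ih =>
      intro x hx
      rw [resid] at hx
      obtain ⟨hxk, hns⟩ := hx
      rw [Set.not_subset] at hns
      obtain ⟨y, hy, hyn⟩ := hns
      obtain ⟨hyk, hyrect⟩ := hy
      obtain ⟨hy1, hy2⟩ := hyrect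
      dsimp only at hy1 hy2
      have hkk : k + 1 + 1 = k + 2 := rfl
      have hyn' : β * (B (k+1) : ℝ) ≤ |(y.1:ℝ) - (x.1:ℝ)| ∨
          β * (S (k+1) : ℝ) ≤ |(y.2:ℝ) - (x.2:ℝ)| := by
        by_contra h
        push_neg at h
        exact hyn ⟨h.1, h.2⟩
      obtain ⟨A1, hA1t, hA1c, hA1E, hA1r⟩ := ih x hxk
      obtain ⟨A2, hA2t, hA2c, hA2E, hA2r⟩ := ih y hyk
      have hBpos : (0:ℝ) ≤ (B (k+1) : ℝ) := by positivity
      have hSpos : (0:ℝ) ≤ (S (k+1) : ℝ) := by positivity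
      have hdisj : Disjoint A1 A2 := by
        rw [Finset.disjoint_left]
        intro a ha1 ha2
        obtain ⟨h11, h12⟩ := hA1r a ha1
        obtain ⟨h21, h22⟩ := hA2r a ha2
        rcases hyn' with h | h
        · have ht : |(y.1:ℝ) - (x.1:ℝ)| ≤ |(y.1:ℝ) - (a.1:ℝ)| + |(a.1:ℝ) - (x.1:ℝ)| :=
            abs_sub_le _ _ _
          have hcm : |(y.1:ℝ) - (a.1:ℝ)| = |(a.1:ℝ) - (y.1:ℝ)| := abs_sub_comm _ _
          nlinarith [mul_le_mul_of_nonneg_right hβ hBpos]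
        · have ht : |(y.2:ℝ) - (x.2:ℝ)| ≤ |(y.2:ℝ) - (a.2:ℝ)| + |(a.2:ℝ) - (x.2:ℝ)| :=
            abs_sub_le _ _ _
          have hcm : |(y.2:ℝ) - (a.2:ℝ)| = |(a.2:ℝ) - (y.2:ℝ)| := abs_sub_comm _ _
          nlinarith [mul_le_mul_of_nonneg_right hβ hSpos]
      refine ⟨A1 ∪ A2, ?_, ?_, ?_, ?_⟩
      · rw [trees, Finset.mem_biUnion]
        refine ⟨y, ?_, ?_⟩
        · rw [Rset, Finset.mem_product, Finset.mem_Icc, Finset.mem_Icc]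
          have hc1 : γ * (B (k+2) : ℝ) ≤ (⌈γ * (B (k+2) : ℝ)⌉₊ : ℝ) := Nat.le_ceil _
          have hc2 : γ * (S (k+2) : ℝ) ≤ (⌈γ * (S (k+2) : ℝ)⌉₊ : ℝ) := Nat.le_ceil _
          have h1 : |y.1 - x.1| ≤ (⌈γ * (B (k+2) : ℝ)⌉₊ : ℤ) := by
            have hr : ((|y.1 - x.1| : ℤ) : ℝ) ≤ ((⌈γ * (B (k+2) : ℝ)⌉₊ : ℤ) : ℝ) := by
              push_cast
              linarith
            exact_mod_cast hr
          have h1' := abs_le.mp h1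
          have h2a' : y.2 < x.2 + ⌈γ * (S (k+2) : ℝ)⌉₊ := by
            have h2a : (y.2 : ℝ) < (x.2 : ℝ) + (⌈γ * (S (k+2) : ℝ)⌉₊ : ℝ) := by
              have := (abs_lt.mp hy2).2; linarith
            exact_mod_cast h2a
          have h2b' : x.2 < y.2 + ⌈γ * (S (k+2) : ℝ)⌉₊ := by
            have h2b : (x.2 : ℝ) < (y.2 : ℝ) + (⌈γ * (S (k+2) : ℝ)⌉₊ : ℝ) := by
              have := (abs_lt.mp hy2).1; linarith
            exact_mod_cast h2b
          exact ⟨⟨by omega, by omega⟩, ⟨by omega, by omega⟩⟩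
        · rw [Finset.mem_image]
          exact ⟨(A1, A2), Finset.mem_product.mpr ⟨hA1t, hA2t⟩, rfl⟩
      · rw [Finset.card_union_of_disjoint hdisj, hA1c, hA2c, pow_succ]; ring
      · intro a ha
        rcases Finset.mem_union.mp (by exact_mod_cast ha) with h | h
        · exact hA1E h
        · exact hA2E h
      · intro a ha
        rw [hkk]
        have hBm : (B (k+1) : ℝ) ≤ (B (k+2) : ℝ) := by exact_mod_cast hBmono (k+1) (by omega)
        have hSm : (S (k+1) : ℝ) ≤ (S (k+2) : ℝ) := by exact_mod_cast hSmono (k+1) (by omega)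
        rcases Finset.mem_union.mp ha with h | h
        · obtain ⟨h1, h2⟩ := hA1r a h
          constructor <;> nlinarith
        · obtain ⟨h1, h2⟩ := hA2r a h
          have ht1 : |(a.1:ℝ) - (x.1:ℝ)| ≤ |(a.1:ℝ) - (y.1:ℝ)| + |(y.1:ℝ) - (x.1:ℝ)| :=
            abs_sub_le _ _ _
          have ht2 : |(a.2:ℝ) - (x.2:ℝ)| ≤ |(a.2:ℝ) - (y.2:ℝ)| + |(y.2:ℝ) - (x.2:ℝ)| :=
            abs_sub_le _ _ _
          constructor
          · nlinarith [hBrat k]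
          · nlinarith [hSrat k]

lemma tcount_le_rpow (γ : ℝ) (B S : ℕ → ℕ) (w : ℝ) (hw : 1 ≤ w)
    (hm : ∀ k, (mcount γ B S k : ℝ) ≤ w ^ ((1.5:ℝ)^k)) :
    ∀ k, (tcount γ B S k : ℝ) ≤ w ^ ((2:ℝ)*2^k - 2*(1.5:ℝ)^k) := by
  have hw0 : (0:ℝ) < w := by linarith
  intro k
  induction k with
  | zero =>
      have he : (2:ℝ)*2^0 - 2*(1.5:ℝ)^0 = 0 := by norm_num
      rw [he, Real.rpow_zero, tcount]; norm_num
  | succ k ih =>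
      have htc : (tcount γ B S (k+1) : ℝ) = (mcount γ B S k : ℝ) * (tcount γ B S k : ℝ)^2 := by
        rw [tcount]; push_cast; ring
      have h1 : (tcount γ B S (k+1) : ℝ) ≤
          w ^ ((1.5:ℝ)^k) * (w ^ ((2:ℝ)*2^k - 2*(1.5:ℝ)^k))^2 := by
        rw [htc]
        refine mul_le_mul (hm k) ?_ (by positivity) (by positivity)
        exact pow_le_pow_left₀ (by positivity) ih 2
      refine le_trans h1 (le_of_eq ?_)
      rw [sq, ← Real.rpow_add hw0, ← Real.rpow_add hw0]
      congr 1
      ring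

lemma prob_le (β γ : ℝ) (B S : ℕ → ℕ)
    (Ω : Type*) [MeasurableSpace Ω] (P : Measure Ω) (ε : ℝ≥0∞)
    (E : Ω → Set (ℤ × ℕ))
    (hprob : ∀ A : Finset (ℤ × ℕ), P {ω | ↑A ⊆ E ω} ≤ ε ^ A.card)
    (hwit : ∀ ω x k, x ∈ resid β γ B S (E ω) k →
      ∃ A ∈ trees γ B S k x, A.card = 2^k ∧ ↑A ⊆ E ω)
    (x : ℤ × ℕ) (k : ℕ) :
    P {ω | x ∈ resid β γ B S (E ω) k} ≤ (tcount γ B S k : ℝ≥0∞) * ε ^ (2^k) := by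
  classical
  set F := (trees γ B S k x).filter (fun A => A.card = 2^k) with hF
  have hsub : {ω | x ∈ resid β γ B S (E ω) k} ⊆ ⋃ A ∈ F, {ω | ↑A ⊆ E ω} := by
    intro ω hω
    obtain ⟨A, hAt, hAc, hAE⟩ := hwit ω x k hω
    exact Set.mem_iUnion₂.mpr ⟨A, Finset.mem_filter.mpr ⟨hAt, hAc⟩, hAE⟩
  calc P {ω | x ∈ resid β γ B S (E ω) k} ≤ P (⋃ A ∈ F, {ω | ↑A ⊆ E ω}) := measure_mono hsub
    _ ≤ ∑ A ∈ F, P {ω | ↑A ⊆ E ω} := measure_biUnion_finset_le _ _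
    _ ≤ ∑ _A ∈ F, ε ^ (2^k) := by
        refine Finset.sum_le_sum fun A hA => ?_
        rw [← (Finset.mem_filter.mp hA).2]
        exact hprob A
    _ = (F.card : ℝ≥0∞) * ε ^ (2^k) := by rw [Finset.sum_const, nsmul_eq_mul]
    _ ≤ (tcount γ B S k : ℝ≥0∞) * ε ^ (2^k) := by
        refine mul_le_mul_left ?_ _
        exact_mod_cast le_trans (Finset.card_filter_le _ _) (trees_card_le γ B S k x)

end SparseAux

set_option maxHeartbeats 2000000 in
/-- Sparsity Lemma, almost-sure sparsity: under the growth assumption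
`lim_k log(Q_k V_k)/1.5^k = 0` with `Q_k = B_{k+1}/B_k`, `V_k = S_{k+1}/S_k`, there is an
`ε₀ > 0` such that for every `0 < ε ≤ ε₀` and every ε-bounded random subset `E` of
`ℤ × ℤ≥0`, with probability 1 the set `E` is sparse: `P(⋂_k E^(k) = ∅) = 1`. -/
theorem sparsity_almost_sure
    (β γ : ℝ) (hγ : 1 < γ) (hβ : 3 * γ ≤ β)
    (B S : ℕ → ℕ) (hB1 : B 1 = 1) (hS1 : S 1 = 1)
    (hBmono : ∀ k, 1 ≤ k → B k < B (k + 1))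
    (hSmono : ∀ k, 1 ≤ k → S k < S (k + 1))
    (hBratio : ∀ k, 1 ≤ k → 2 * β * (B k : ℝ) ≤ (B (k + 1) : ℝ))
    (hSratio : ∀ k, 1 ≤ k → 2 * β * (S k : ℝ) ≤ (S (k + 1) : ℝ))
    (hgrowth : Tendsto
      (fun k : ℕ => Real.logb 2 (((B (k + 1) : ℝ) / (B k : ℝ)) * ((S (k + 1) : ℝ) / (S k : ℝ)))
        / (1.5 : ℝ) ^ k) atTop (nhds 0)) :
    ∃ ε₀ : ℝ≥0∞, 0 < ε₀ ∧
      ∀ ε : ℝ≥0∞, 0 < ε → ε ≤ ε₀ →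
        ∀ (Ω : Type*) [MeasurableSpace Ω] (P : Measure Ω) [IsProbabilityMeasure P]
          (E : Ω → Set (ℤ × ℕ)),
          (∀ A : Finset (ℤ × ℕ), MeasurableSet {ω | ↑A ⊆ E ω}) →
          (∀ A : Finset (ℤ × ℕ), P {ω | ↑A ⊆ E ω} ≤ ε ^ A.card) →
          P {ω | (⋂ k : ℕ, resid β γ B S (E ω) k) = ∅} = 1 := by
  classical
  have hγ0 : (0:ℝ) < γ := by linarith
  -- basic facts about B and S
  have hB' : ∀ k, 1 ≤ B (k+1) := by
    intro k
    induction k with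
    | zero => simp [hB1]
    | succ k ih => have := hBmono (k+1) (by omega); omega
  have hB : ∀ k, 1 ≤ k → 1 ≤ B k := by
    intro k hk
    cases k with
    | zero => omega
    | succ k => exact hB' k
  have hS' : ∀ k, 1 ≤ S (k+1) := by
    intro k
    induction k with
    | zero => simp [hS1]
    | succ k ih => have := hSmono (k+1) (by omega); omega
  have hS : ∀ k, 1 ≤ k → 1 ≤ S k := by
    intro k hk
    cases k with
    | zero => omega
    | succ k => exact hS' k
  have hBm : ∀ k, 1 ≤ k → B k ≤ B (k+1) := fun k hk => le_of_lt (hBmono k hk)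
  have hSm : ∀ k, 1 ≤ k → S k ≤ S (k+1) := fun k hk => le_of_lt (hSmono k hk)
  have hBrat3 : ∀ k, 3 * (B (k+1) : ℝ) ≤ (B (k+2) : ℝ) := by
    intro k
    have h1 := hBratio (k+1) (by omega)
    have h2 : (0:ℝ) ≤ (B (k+1) : ℝ) := by positivity
    nlinarith
  have hSrat3 : ∀ k, 3 * (S (k+1) : ℝ) ≤ (S (k+2) : ℝ) := by
    intro k
    have h1 := hSratio (k+1) (by omega)
    have h2 : (0:ℝ) ≤ (S (k+1) : ℝ) := by positivity
    nlinarith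
  -- extract a uniform bound D on the normalized logs
  set f : ℕ → ℝ := fun k =>
    Real.logb 2 (((B (k + 1) : ℝ) / (B k : ℝ)) * ((S (k + 1) : ℝ) / (S k : ℝ))) / (1.5 : ℝ) ^ k
    with hf
  obtain ⟨N, hN⟩ := (hgrowth.eventually_lt_const (show (0:ℝ) < 1 by norm_num)).exists_forall_of_atTop
  set D : ℝ := 1 + ∑ j ∈ Finset.range N, |f j| with hD
  have hD1 : 1 ≤ D := by
    have : (0:ℝ) ≤ ∑ j ∈ Finset.range N, |f j| :=
      Finset.sum_nonneg fun j _ => abs_nonneg _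
    rw [hD]; linarith
  have hfD : ∀ k, f k ≤ D := by
    intro k
    rcases le_or_gt N k with h | h
    · have := hN k h
      linarith
    · have h1 : |f k| ≤ ∑ j ∈ Finset.range N, |f j| :=
        Finset.single_le_sum (fun i _ => abs_nonneg (f i)) (Finset.mem_range.mpr h)
      have h2 : f k ≤ |f k| := le_abs_self _
      rw [hD]; linarith
  -- Q_k V_k ≤ 2 ^ (D * 1.5^k)
  have hQV : ∀ k, 1 ≤ k →
      ((B (k+1) : ℝ)/(B k : ℝ)) * ((S (k+1) : ℝ)/(S k : ℝ)) ≤ (2:ℝ) ^ (D * (1.5:ℝ)^k) := by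
    intro k hk
    have hBk : (1:ℝ) ≤ (B k : ℝ) := by exact_mod_cast hB k hk
    have hBk1 : (1:ℝ) ≤ (B (k+1) : ℝ) := by exact_mod_cast hB (k+1) (by omega)
    have hSk : (1:ℝ) ≤ (S k : ℝ) := by exact_mod_cast hS k hk
    have hSk1 : (1:ℝ) ≤ (S (k+1) : ℝ) := by exact_mod_cast hS (k+1) (by omega)
    have hz : (0:ℝ) < ((B (k+1) : ℝ)/(B k : ℝ)) * ((S (k+1) : ℝ)/(S k : ℝ)) := by positivity
    have hlog : Real.logb 2 (((B (k+1) : ℝ)/(B k : ℝ)) * ((S (k+1) : ℝ)/(S k : ℝ))) ≤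
        D * (1.5:ℝ)^k := by
      have h15 : (0:ℝ) < (1.5:ℝ)^k := by positivity
      have := hfD k
      rw [hf] at this
      simp only at this
      calc Real.logb 2 (((B (k+1) : ℝ)/(B k : ℝ)) * ((S (k+1) : ℝ)/(S k : ℝ)))
          = (Real.logb 2 (((B (k+1) : ℝ)/(B k : ℝ)) * ((S (k+1) : ℝ)/(S k : ℝ)))
            / (1.5:ℝ)^k) * (1.5:ℝ)^k := by field_simp
        _ ≤ D * (1.5:ℝ)^k := by
            exact mul_le_mul_of_nonneg_right this (le_of_lt h15)
    calc ((B (k+1) : ℝ)/(B k : ℝ)) * ((S (k+1) : ℝ)/(S k : ℝ))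
        = (2:ℝ) ^ Real.logb 2 (((B (k+1) : ℝ)/(B k : ℝ)) * ((S (k+1) : ℝ)/(S k : ℝ))) :=
          (Real.rpow_logb (by norm_num) (by norm_num) hz).symm
      _ ≤ (2:ℝ) ^ (D * (1.5:ℝ)^k) :=
          Real.rpow_le_rpow_of_exponent_le (by norm_num) hlog
  -- product growth bound
  have hprod : ∀ k, (B (k+1) : ℝ) * (S (k+1) : ℝ) ≤ (2:ℝ) ^ (3*D*(1.5:ℝ)^k) := by
    intro k
    induction k with
    | zero =>
        have h0 : (B (0+1) : ℝ) * (S (0+1) : ℝ) = 1 := by rw [hB1, hS1]; norm_num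
        calc (B (0+1) : ℝ) * (S (0+1) : ℝ) = (2:ℝ)^(0:ℝ) := by rw [h0, Real.rpow_zero]
          _ ≤ (2:ℝ) ^ (3*D*(1.5:ℝ)^0) :=
              Real.rpow_le_rpow_of_exponent_le (by norm_num) (by positivity)
    | succ k ih =>
        have hb1 : (1:ℝ) ≤ (B (k+1) : ℝ) := by exact_mod_cast hB (k+1) (by omega)
        have hs1 : (1:ℝ) ≤ (S (k+1) : ℝ) := by exact_mod_cast hS (k+1) (by omega)
        have hb0 : (B (k+1) : ℝ) ≠ 0 := by linarith
        have hs0 : (S (k+1) : ℝ) ≠ 0 := by linarith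
        have key : (B (k+2) : ℝ) * (S (k+2) : ℝ) =
            ((B (k+1) : ℝ) * (S (k+1) : ℝ)) *
            (((B (k+2) : ℝ)/(B (k+1) : ℝ)) * ((S (k+2) : ℝ)/(S (k+1) : ℝ))) := by
          field_simp
        have h2 := hQV (k+1) (by omega)
        calc (B (k+1+1) : ℝ) * (S (k+1+1) : ℝ)
            = ((B (k+1) : ℝ) * (S (k+1) : ℝ)) *
              (((B (k+2) : ℝ)/(B (k+1) : ℝ)) * ((S (k+2) : ℝ)/(S (k+1) : ℝ))) := key
          _ ≤ (2:ℝ) ^ (3*D*(1.5:ℝ)^k) * (2:ℝ) ^ (D * (1.5:ℝ)^(k+1)) := by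
              refine mul_le_mul ih h2 (by positivity) (by positivity)
          _ = (2:ℝ) ^ (3*D*(1.5:ℝ)^k + D * (1.5:ℝ)^(k+1)) := (Real.rpow_add (by norm_num) _ _).symm
          _ = (2:ℝ) ^ (3*D*(1.5:ℝ)^(k+1)) := by congr 1; ring
  -- the constant w and the mcount bound
  obtain ⟨w, hwdef⟩ : ∃ w : ℝ, w = 25*γ^2*(2:ℝ)^((4.5:ℝ)*D) := ⟨_, rfl⟩
  have hw2pos : (0:ℝ) < (2:ℝ)^((4.5:ℝ)*D) := Real.rpow_pos_of_pos (by norm_num) _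
  have hw2ge : (1:ℝ) ≤ (2:ℝ)^((4.5:ℝ)*D) := by
    rw [show (1:ℝ) = (2:ℝ)^(0:ℝ) by simp]
    exact Real.rpow_le_rpow_of_exponent_le (by norm_num) (by nlinarith)
  have hw1 : 1 ≤ w := by rw [hwdef]; nlinarith
  have hw0 : (0:ℝ) < w := by linarith
  have hwne : w ≠ 0 := ne_of_gt hw0
  have h2w2 : (0:ℝ) < 2*w^2 := by positivity
  have hm : ∀ k, (SparseAux.mcount γ B S k : ℝ) ≤ w ^ ((1.5:ℝ)^k) := by
    intro k
    have hb1 : (1:ℝ) ≤ (B (k+2) : ℝ) := by exact_mod_cast hB (k+2) (by omega)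
    have hs1 : (1:ℝ) ≤ (S (k+2) : ℝ) := by exact_mod_cast hS (k+2) (by omega)
    have hc1 : (⌈γ*(B (k+2):ℝ)⌉₊ : ℝ) < γ*(B (k+2):ℝ) + 1 := Nat.ceil_lt_add_one (by positivity)
    have hc2 : (⌈γ*(S (k+2):ℝ)⌉₊ : ℝ) < γ*(S (k+2):ℝ) + 1 := Nat.ceil_lt_add_one (by positivity)
    have h5B : 2*(⌈γ*(B (k+2):ℝ)⌉₊ : ℝ)+1 ≤ 5*(γ*(B (k+2):ℝ)) := by nlinarith
    have h5S : 2*(⌈γ*(S (k+2):ℝ)⌉₊ : ℝ)+1 ≤ 5*(γ*(S (k+2):ℝ)) := by nlinarith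
    have hmc : (SparseAux.mcount γ B S k : ℝ) ≤ 25*γ^2*((B (k+2):ℝ)*(S (k+2):ℝ)) := by
      rw [SparseAux.mcount]
      push_cast
      nlinarith [hc1, hc2, hb1, hs1]
    have h15k : (1:ℝ) ≤ (1.5:ℝ)^k := one_le_pow₀ (by norm_num)
    calc (SparseAux.mcount γ B S k : ℝ)
        ≤ 25*γ^2*((B (k+2):ℝ)*(S (k+2):ℝ)) := hmc
      _ ≤ 25*γ^2*((2:ℝ) ^ (3*D*(1.5:ℝ)^(k+1))) := by
          refine mul_le_mul_of_nonneg_left (hprod (k+1)) (by positivity)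
      _ ≤ (25*γ^2)^((1.5:ℝ)^k) * ((2:ℝ)^((4.5:ℝ)*D))^((1.5:ℝ)^k) := by
          have e1 : ((2:ℝ)^((4.5:ℝ)*D))^((1.5:ℝ)^k) = (2:ℝ) ^ (3*D*(1.5:ℝ)^(k+1)) := by
            rw [← Real.rpow_mul (by norm_num)]
            congr 1
            ring
          rw [e1]
          refine mul_le_mul_of_nonneg_right ?_ (by positivity)
          have := Real.rpow_le_rpow_of_exponent_le (show (1:ℝ) ≤ 25*γ^2 by nlinarith) h15k
          rwa [Real.rpow_one] at this
      _ = w ^ ((1.5:ℝ)^k) := by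
          rw [hwdef]
          exact (Real.mul_rpow (by positivity) (by positivity)).symm
  -- choose ε₀
  refine ⟨ENNReal.ofReal (1/(2*w^2)), ?_, ?_⟩
  · rw [ENNReal.ofReal_pos]
    exact div_pos one_pos h2w2
  · intro ε hε hεle Ω _ P _ E _hmeas hprob
    -- per-point null sets
    set Sx : (ℤ × ℕ) → Set Ω := fun x => {ω | ∀ j, x ∈ resid β γ B S (E ω) j} with hSx
    have hwit : ∀ ω x k, x ∈ resid β γ B S (E ω) k →
        ∃ A ∈ SparseAux.trees γ B S k x, A.card = 2^k ∧ ↑A ⊆ E ω := by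
      intro ω x k hx
      obtain ⟨A, hA1, hA2, hA3, _⟩ :=
        SparseAux.witness β γ B S hγ hβ hB hS hBm hSm hBrat3 hSrat3 (E ω) k x hx
      exact ⟨A, hA1, hA2, hA3⟩
    have hkey : ∀ (x : ℤ × ℕ) (k : ℕ),
        P (Sx x) ≤ (ENNReal.ofReal (1/2)) ^ (2^k) := by
      intro x k
      have hsub : Sx x ⊆ {ω | x ∈ resid β γ B S (E ω) k} := fun ω hω => hω k
      have h1 : P (Sx x) ≤ (SparseAux.tcount γ B S k : ℝ≥0∞) * ε ^ (2^k) :=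
        le_trans (measure_mono hsub)
          (SparseAux.prob_le β γ B S Ω P ε E hprob hwit x k)
      have htreal : (SparseAux.tcount γ B S k : ℝ) ≤ (w^2)^(2^k : ℕ) := by
        refine le_trans (SparseAux.tcount_le_rpow γ B S w hw1 hm k) ?_
        have h2 : w ^ ((2:ℝ)*2^k - 2*(1.5:ℝ)^k) ≤ w ^ ((2:ℝ)*2^k) := by
          refine Real.rpow_le_rpow_of_exponent_le hw1 ?_
          have : (0:ℝ) ≤ 2*(1.5:ℝ)^k := by positivity
          linarith
        have h3 : w ^ ((2:ℝ)*2^k) = (w^2)^(2^k : ℕ) := by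
          have he : ((2:ℝ)*2^k) = ((2*2^k : ℕ) : ℝ) := by push_cast; ring
          rw [he, Real.rpow_natCast, pow_mul]
        rw [← h3]
        exact h2
      have ht : (SparseAux.tcount γ B S k : ℝ≥0∞) ≤ (ENNReal.ofReal (w^2)) ^ (2^k) := by
        rw [← ENNReal.ofReal_natCast, ← ENNReal.ofReal_pow (by positivity)]
        exact ENNReal.ofReal_le_ofReal htreal
      have hεp : ε ^ (2^k) ≤ (ENNReal.ofReal (1/(2*w^2))) ^ (2^k) := pow_le_pow_left' hεle _
      calc P (Sx x) ≤ (SparseAux.tcount γ B S k : ℝ≥0∞) * ε ^ (2^k) := h1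
        _ ≤ (ENNReal.ofReal (w^2)) ^ (2^k) * (ENNReal.ofReal (1/(2*w^2))) ^ (2^k) :=
            mul_le_mul' ht hεp
        _ = (ENNReal.ofReal (w^2) * ENNReal.ofReal (1/(2*w^2))) ^ (2^k) := (mul_pow _ _ _).symm
        _ = (ENNReal.ofReal (1/2)) ^ (2^k) := by
            rw [← ENNReal.ofReal_mul (by positivity)]
            congr 1
            field_simp
    have hnull : ∀ x : ℤ × ℕ, P (Sx x) = 0 := by
      intro x
      have htend : Tendsto (fun k : ℕ => (ENNReal.ofReal (1/2)) ^ (2^k)) atTop (nhds 0) :=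
        (ENNReal.tendsto_pow_atTop_nhds_zero_of_lt_one
          (ENNReal.ofReal_lt_one.mpr (by norm_num))).comp
          (tendsto_pow_atTop_atTop_of_one_lt (by norm_num))
      have := ge_of_tendsto htend (Filter.Eventually.of_forall (hkey x))
      exact le_antisymm this (zero_le)
    have hcompl : {ω | (⋂ k : ℕ, resid β γ B S (E ω) k) = ∅}ᶜ ⊆ ⋃ x : ℤ × ℕ, Sx x := by
      intro ω hω
      simp only [Set.mem_compl_iff, Set.mem_setOf_eq] at hω
      obtain ⟨x, hx⟩ := Set.nonempty_iff_ne_empty.mpr hω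
      exact Set.mem_iUnion.mpr ⟨x, fun k => Set.mem_iInter.mp hx k⟩
    have h0 : P ({ω | (⋂ k : ℕ, resid β γ B S (E ω) k) = ∅}ᶜ) = 0 :=
      measure_mono_null hcompl (measure_iUnion_null hnull)
    have h1 : (1:ℝ≥0∞) ≤ P {ω | (⋂ k : ℕ, resid β γ B S (E ω) k) = ∅} := by
      have hle := measure_union_le (μ := P)
        {ω | (⋂ k : ℕ, resid β γ B S (E ω) k) = ∅}
        {ω | (⋂ k : ℕ, resid β γ B S (E ω) k) = ∅}ᶜ
      rw [Set.union_compl_self, measure_univ, h0, add_zero] at hle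
      exact hle
    exact le_antisymm prob_le_one h1
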